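/- Let S be the 6×3 real matrix with rows (1,1,1), (1,1,1), (1,1,0), (−1,0,0), (0,−1,0), (0,0,−1). Then S is SSD: every square submatrix of S (given by injective row and column selections) is either sign nonsingular or has determinant zero; yet the SR graph G(S) contains two e-cycles with distinct edge sets having S-to-R intersection. Hence Condition (*) is not a necessary condition for a matrix to be SSD. -/

import Mathlib

namespace SRGraph

variable {n m : ℕ}

/-- A cycle of the SR graph `G(S)`: `r ≥ 2` together with injective maps
`a : Fin r → Fin n` (S-vertices) and `b : Fin r → Fin m` (R-vertices) such that the
entries `S (a j) (b j)` and `S (a j) (b (j+1))` (indices mod `r`) are all nonzero. -/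
def IsCyc (S : Matrix (Fin n) (Fin m) ℝ) {r : ℕ} (a : Fin r → Fin n) (b : Fin r → Fin m) :
    Prop :=
  2 ≤ r ∧ Function.Injective a ∧ Function.Injective b ∧
    (∀ j, S (a j) (b j) ≠ 0) ∧ (∀ j, S (a j) (b (finRotate r j)) ≠ 0)

/-- The parity `P(C) = (-1)^r ∏_j sign(S (a j) (b j)) · sign(S (a j) (b (j+1)))` of a
cycle; the cycle is an e-cycle if this is `1` and an o-cycle if it is `-1`. -/
noncomputable def parity (S : Matrix (Fin n) (Fin m) ℝ) {r : ℕ}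
    (a : Fin r → Fin n) (b : Fin r → Fin m) : ℝ :=
  (-1 : ℝ) ^ r *
    ∏ j : Fin r, Real.sign (S (a j) (b j)) * Real.sign (S (a j) (b (finRotate r j)))

/-- A cycle is an s-cycle when the products of the absolute values of the entries on the
two halves of its disconnecting partition agree. -/
def IsSCyc (S : Matrix (Fin n) (Fin m) ℝ) {r : ℕ} (a : Fin r → Fin n)
    (b : Fin r → Fin m) : Prop :=
  ∏ j : Fin r, |S (a j) (b j)| = ∏ j : Fin r, |S (a j) (b (finRotate r j))|

/-- The edge set of a cycle: the `2r` pairs `(a j, b j)` and `(a j, b (j+1))`. -/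
def cycEdges {r : ℕ} (a : Fin r → Fin n) (b : Fin r → Fin m) : Set (Fin n × Fin m) :=
  {e | ∃ j : Fin r, e = (a j, b j) ∨ e = (a j, b (finRotate r j))}

/-- The vertex set of a cycle inside `Fin n ⊕ Fin m`. -/
def cycVerts {r : ℕ} (a : Fin r → Fin n) (b : Fin r → Fin m) : Set (Fin n ⊕ Fin m) :=
  Set.range (Sum.inl ∘ a) ∪ Set.range (Sum.inr ∘ b)

/-- Adjacency relation on `Fin n ⊕ Fin m` determined by a set `E` of (S,R) edges. -/
def adjOf (E : Set (Fin n × Fin m)) : (Fin n ⊕ Fin m) → (Fin n ⊕ Fin m) → Prop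
  | Sum.inl i, Sum.inr j => (i, j) ∈ E
  | Sum.inr j, Sum.inl i => (i, j) ∈ E
  | _, _ => False

/-- The connected component of `v` in the subgraph with vertex set `V` and edge set `E`. -/
def componentOf (E : Set (Fin n × Fin m)) (V : Set (Fin n ⊕ Fin m))
    (v : Fin n ⊕ Fin m) : Set (Fin n ⊕ Fin m) :=
  {x ∈ V | Relation.ReflTransGen (adjOf E) v x}

/-- Vertex set of an S-to-R path `u 0 – w 0 – u 1 – ⋯ – u p – w p`. -/
def pathVerts {p : ℕ} (u : Fin (p + 1) → Fin n) (w : Fin (p + 1) → Fin m) :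
    Set (Fin n ⊕ Fin m) :=
  Set.range (Sum.inl ∘ u) ∪ Set.range (Sum.inr ∘ w)

/-- Edge set (the `2p+1` pairs `(u i, w i)` and `(u (i+1), w i)`) of an S-to-R path. -/
def pathEdges {p : ℕ} (u : Fin (p + 1) → Fin n) (w : Fin (p + 1) → Fin m) :
    Set (Fin n × Fin m) :=
  {e | ∃ i : Fin (p + 1), e = (u i, w i)} ∪ {e | ∃ i : Fin p, e = (u i.succ, w i.castSucc)}

/-- The subgraph with (nonempty) vertex set `V` and edge set `E` has all of its connected
components equal to paths joining an S-vertex to an R-vertex. -/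
def SRIntersection (V : Set (Fin n ⊕ Fin m)) (E : Set (Fin n × Fin m)) : Prop :=
  V.Nonempty ∧
    ∀ v ∈ V, ∃ (p : ℕ) (u : Fin (p + 1) → Fin n) (w : Fin (p + 1) → Fin m),
      Function.Injective u ∧ Function.Injective w ∧
      pathVerts u w = componentOf E V v ∧
      pathEdges u w = {e ∈ E | Sum.inl e.1 ∈ componentOf E V v}

/-- `G(S)` contains two e-cycles, with distinct edge sets, having S-to-R intersection. -/
def TwoECyclesWithSRIntersection (S : Matrix (Fin n) (Fin m) ℝ) : Prop :=
  ∃ (r₁ : ℕ) (a₁ : Fin r₁ → Fin n) (b₁ : Fin r₁ → Fin m)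
    (r₂ : ℕ) (a₂ : Fin r₂ → Fin n) (b₂ : Fin r₂ → Fin m),
    IsCyc S a₁ b₁ ∧ parity S a₁ b₁ = 1 ∧ IsCyc S a₂ b₂ ∧ parity S a₂ b₂ = 1 ∧
    cycEdges a₁ b₁ ≠ cycEdges a₂ b₂ ∧
    SRIntersection (cycVerts a₁ b₁ ∩ cycVerts a₂ b₂) (cycEdges a₁ b₁ ∩ cycEdges a₂ b₂)

/-- Condition (*): all e-cycles are s-cycles, and no two e-cycles (with distinct edge
sets) have S-to-R intersection. -/
def ConditionStar (S : Matrix (Fin n) (Fin m) ℝ) : Prop :=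
  (∀ (r : ℕ) (a : Fin r → Fin n) (b : Fin r → Fin m),
      IsCyc S a b → parity S a b = 1 → IsSCyc S a b) ∧
  ¬ TwoECyclesWithSRIntersection S

/-- Two real matrices have the same sign pattern. -/
def SameSignPattern {k l : ℕ} (B M : Matrix (Fin k) (Fin l) ℝ) : Prop :=
  ∀ i j, Real.sign (B i j) = Real.sign (M i j)

/-- A square real matrix is sign nonsingular if every matrix with the same sign pattern
has nonzero determinant. -/
def SignNonsingular {k : ℕ} (M : Matrix (Fin k) (Fin k) ℝ) : Prop :=
  ∀ B : Matrix (Fin k) (Fin k) ℝ, SameSignPattern B M → B.det ≠ 0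

/-- A square real matrix is sign singular if every matrix with the same sign pattern has
zero determinant. -/
def SignSingular {k : ℕ} (M : Matrix (Fin k) (Fin k) ℝ) : Prop :=
  ∀ B : Matrix (Fin k) (Fin k) ℝ, SameSignPattern B M → B.det = 0

/-- `S` is strongly sign determined: every square submatrix of `S` is sign nonsingular or
has determinant zero. -/
def SSD (S : Matrix (Fin n) (Fin m) ℝ) : Prop :=
  ∀ (k : ℕ) (ρ : Fin k → Fin n) (c : Fin k → Fin m),
    Function.Injective ρ → Function.Injective c →
    SignNonsingular (S.submatrix ρ c) ∨ (S.submatrix ρ c).det = 0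

end SRGraph

open SRGraph

/-- The stoichiometric matrix of the reaction system
`D ⇌ A + B + C`, `E ⇌ A + B + C`, `F ⇌ A + B`. -/
noncomputable def Scounter : Matrix (Fin 6) (Fin 3) ℝ :=
  !![1, 1, 1;
     1, 1, 1;
     1, 1, 0;
     -1, 0, 0;
     0, -1, 0;
     0, 0, -1]


namespace SSDAux

open SRGraph

/-- Integer version of `Scounter`. -/
def SZ : Matrix (Fin 6) (Fin 3) ℤ :=
  !![1, 1, 1; 1, 1, 1; 1, 1, 0; -1, 0, 0; 0, -1, 0; 0, 0, -1]

/-- The (real) sign of the term of the determinant associated to a permutation. -/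
noncomputable def tR {k : ℕ} (M : Matrix (Fin k) (Fin k) ℝ) (σ : Equiv.Perm (Fin k)) : ℝ :=
  ((Equiv.Perm.sign σ : ℤ) : ℝ) * ∏ i, Real.sign (M (σ i) i)

/-- Integer version of the term sign. -/
def tZ {k : ℕ} (N : Matrix (Fin k) (Fin k) ℤ) (σ : Equiv.Perm (Fin k)) : ℤ :=
  ((Equiv.Perm.sign σ : ℤ)) * ∏ i, N (σ i) i

/-- If every term of the determinant expansion has sign `0` or `ε ≠ 0`, and some term has
sign `ε`, then the matrix is sign nonsingular. -/
theorem core {k : ℕ} (M : Matrix (Fin k) (Fin k) ℝ) (ε : ℝ) (hε : ε ≠ 0)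
    (h : ∀ σ, tR M σ = 0 ∨ tR M σ = ε)
    (hex : ∃ σ, tR M σ = ε) : SignNonsingular M := by
  intro B hB
  have hsB : ∀ i j, Real.sign (B i j) = Real.sign (M i j) := hB
  have main : ∀ σ : Equiv.Perm (Fin k), tR M σ = ε →
      ε * (((Equiv.Perm.sign σ : ℤ) : ℝ) * ∏ i, B (σ i) i)
        = ∏ i, (Real.sign (B (σ i) i) * B (σ i) i) := by
    intro σ h1
    rw [Finset.prod_mul_distrib]
    have hprod : ∏ i, Real.sign (B (σ i) i) = ∏ i, Real.sign (M (σ i) i) :=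
      Finset.prod_congr rfl fun i _ => hsB _ _
    rw [hprod]
    rw [tR] at h1
    rcases Int.units_eq_one_or (Equiv.Perm.sign σ) with hs | hs <;>
      rw [hs] at h1 ⊢ <;> push_cast at h1 ⊢ <;> rw [← h1] <;> ring
  have key : 0 < ε * B.det := by
    rw [Matrix.det_apply', Finset.mul_sum]
    apply Finset.sum_pos'
    · intro σ _
      rcases h σ with h0 | h1
      · have hprod : ∏ i, Real.sign (M (σ i) i) = 0 := by
          rw [tR] at h0
          rcases Int.units_eq_one_or (Equiv.Perm.sign σ) with hs | hs <;>
            rw [hs] at h0 <;> push_cast at h0 <;> linarith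
        obtain ⟨i, -, hi⟩ := Finset.prod_eq_zero_iff.mp hprod
        have hBz : B (σ i) i = 0 := Real.sign_eq_zero_iff.mp ((hsB _ _).trans hi)
        have : ∏ i, B (σ i) i = 0 := Finset.prod_eq_zero (Finset.mem_univ i) hBz
        rw [this, mul_zero, mul_zero]
      · rw [main σ h1]
        exact Finset.prod_nonneg fun i _ => Real.sign_mul_nonneg _
    · obtain ⟨σ, h1⟩ := hex
      refine ⟨σ, Finset.mem_univ _, ?_⟩
      rw [main σ h1]
      apply Finset.prod_pos
      intro i _
      apply Real.sign_mul_pos_of_ne_zero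
      intro hBz
      have h0 : Real.sign (M (σ i) i) = 0 := by
        rw [← hsB, hBz, Real.sign_zero]
      have hprod : ∏ i, Real.sign (M (σ i) i) = 0 :=
        Finset.prod_eq_zero (Finset.mem_univ i) h0
      rw [tR, hprod, mul_zero] at h1
      exact hε h1.symm
  intro h0
  rw [h0, mul_zero] at key
  exact lt_irrefl 0 key

theorem tR_eq_cast {k : ℕ} (M : Matrix (Fin k) (Fin k) ℝ) (N : Matrix (Fin k) (Fin k) ℤ)
    (hsign : ∀ i j, Real.sign (M i j) = (N i j : ℝ)) (σ : Equiv.Perm (Fin k)) :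
    tR M σ = (tZ N σ : ℝ) := by
  rw [tR, tZ]
  push_cast
  congr 1
  exact Finset.prod_congr rfl fun i _ => hsign _ _

theorem transfer {k : ℕ} (M : Matrix (Fin k) (Fin k) ℝ) (N : Matrix (Fin k) (Fin k) ℤ)
    (hMN : ∀ i j, M i j = (N i j : ℝ))
    (habs : ∀ i j, N i j = 0 ∨ N i j = 1 ∨ N i j = -1)
    (ε : ℤ) (hε : ε ≠ 0)
    (h : ∀ σ, tZ N σ = 0 ∨ tZ N σ = ε) (hex : ∃ σ, tZ N σ = ε) :
    SignNonsingular M := by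
  have hsign : ∀ i j, Real.sign (M i j) = (N i j : ℝ) := by
    intro i j
    rcases habs i j with hv | hv | hv <;> rw [hMN i j, hv]
    · norm_num [Real.sign_zero]
    · norm_num [Real.sign_one]
    · rw [show ((-1 : ℤ) : ℝ) = -1 by norm_num,
        Real.sign_of_neg (show (-1 : ℝ) < 0 by norm_num)]
  apply core M (ε : ℝ)
  · exact_mod_cast hε
  · intro σ
    rw [tR_eq_cast M N hsign σ]
    rcases h σ with h0 | h0 <;> rw [h0]
    · left; norm_num
    · right; rfl
  · obtain ⟨σ, h0⟩ := hex
    exact ⟨σ, by rw [tR_eq_cast M N hsign σ, h0]⟩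

/-! ### Permutation enumeration -/

theorem perm1_enum : ∀ σ : Equiv.Perm (Fin 1), σ 0 = 0 ∧ (Equiv.Perm.sign σ : ℤ) = 1 := by
  decide

theorem perm2_enum : ∀ σ : Equiv.Perm (Fin 2),
    (σ 0 = 0 ∧ σ 1 = 1 ∧ (Equiv.Perm.sign σ : ℤ) = 1) ∨
    (σ 0 = 1 ∧ σ 1 = 0 ∧ (Equiv.Perm.sign σ : ℤ) = -1) := by
  decide

theorem perm3_enum : ∀ σ : Equiv.Perm (Fin 3),
    (σ 0 = 0 ∧ σ 1 = 1 ∧ σ 2 = 2 ∧ (Equiv.Perm.sign σ : ℤ) = 1) ∨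
    (σ 0 = 1 ∧ σ 1 = 0 ∧ σ 2 = 2 ∧ (Equiv.Perm.sign σ : ℤ) = -1) ∨
    (σ 0 = 2 ∧ σ 1 = 1 ∧ σ 2 = 0 ∧ (Equiv.Perm.sign σ : ℤ) = -1) ∨
    (σ 0 = 0 ∧ σ 1 = 2 ∧ σ 2 = 1 ∧ (Equiv.Perm.sign σ : ℤ) = -1) ∨
    (σ 0 = 1 ∧ σ 1 = 2 ∧ σ 2 = 0 ∧ (Equiv.Perm.sign σ : ℤ) = 1) ∨
    (σ 0 = 2 ∧ σ 1 = 0 ∧ σ 2 = 1 ∧ (Equiv.Perm.sign σ : ℤ) = 1) := by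
  decide

/-! ### Concrete "all determinant terms have sign 0 or ε, one has sign ε" predicates -/

abbrev good1 (N : Matrix (Fin 1) (Fin 1) ℤ) (ε : ℤ) : Prop := N 0 0 = ε

abbrev good2 (N : Matrix (Fin 2) (Fin 2) ℤ) (ε : ℤ) : Prop :=
  ((N 0 0 * N 1 1 = 0 ∨ N 0 0 * N 1 1 = ε) ∧
   (-(N 1 0 * N 0 1) = 0 ∨ -(N 1 0 * N 0 1) = ε)) ∧
  (N 0 0 * N 1 1 = ε ∨ -(N 1 0 * N 0 1) = ε)

abbrev good3 (N : Matrix (Fin 3) (Fin 3) ℤ) (ε : ℤ) : Prop :=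
  ((N 0 0 * N 1 1 * N 2 2 = 0 ∨ N 0 0 * N 1 1 * N 2 2 = ε) ∧
   (-(N 1 0 * N 0 1 * N 2 2) = 0 ∨ -(N 1 0 * N 0 1 * N 2 2) = ε) ∧
   (-(N 2 0 * N 1 1 * N 0 2) = 0 ∨ -(N 2 0 * N 1 1 * N 0 2) = ε) ∧
   (-(N 0 0 * N 2 1 * N 1 2) = 0 ∨ -(N 0 0 * N 2 1 * N 1 2) = ε) ∧
   (N 1 0 * N 2 1 * N 0 2 = 0 ∨ N 1 0 * N 2 1 * N 0 2 = ε) ∧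
   (N 2 0 * N 0 1 * N 1 2 = 0 ∨ N 2 0 * N 0 1 * N 1 2 = ε)) ∧
  (N 0 0 * N 1 1 * N 2 2 = ε ∨ -(N 1 0 * N 0 1 * N 2 2) = ε ∨
   -(N 2 0 * N 1 1 * N 0 2) = ε ∨ -(N 0 0 * N 2 1 * N 1 2) = ε ∨
   N 1 0 * N 2 1 * N 0 2 = ε ∨ N 2 0 * N 0 1 * N 1 2 = ε)

theorem good1_to (N : Matrix (Fin 1) (Fin 1) ℤ) (ε : ℤ) (h : good1 N ε) :
    (∀ σ, tZ N σ = 0 ∨ tZ N σ = ε) ∧ ∃ σ, tZ N σ = ε := by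
  have hval : ∀ σ : Equiv.Perm (Fin 1), tZ N σ = N 0 0 := by
    intro σ
    obtain ⟨h0, hs⟩ := perm1_enum σ
    rw [tZ, Fin.prod_univ_one, h0, hs, one_mul]
  exact ⟨fun σ => Or.inr (by rw [hval σ]; exact h), ⟨1, by rw [hval 1]; exact h⟩⟩

theorem good2_to (N : Matrix (Fin 2) (Fin 2) ℤ) (ε : ℤ) (h : good2 N ε) :
    (∀ σ, tZ N σ = 0 ∨ tZ N σ = ε) ∧ ∃ σ, tZ N σ = ε := by
  have w1 : tZ N 1 = N 0 0 * N 1 1 := by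
    rw [tZ, Fin.prod_univ_two]
    simp
  have w2 : tZ N (Equiv.swap 0 1) = -(N 1 0 * N 0 1) := by
    rw [tZ, Fin.prod_univ_two,
      show (Equiv.swap (0 : Fin 2) 1) 0 = 1 from by decide,
      show (Equiv.swap (0 : Fin 2) 1) 1 = 0 from by decide,
      show ((Equiv.Perm.sign (Equiv.swap (0 : Fin 2) 1) : ℤ)) = -1 from by decide]
    ring
  constructor
  · intro σ
    rcases perm2_enum σ with ⟨h0, h1, hs⟩ | ⟨h0, h1, hs⟩ <;>
      rw [tZ, Fin.prod_univ_two, h0, h1, hs]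
    · rw [one_mul]; exact h.1.1
    · rw [neg_one_mul]; exact h.1.2
  · rcases h.2 with h0 | h0
    · exact ⟨1, by rw [w1]; exact h0⟩
    · exact ⟨Equiv.swap 0 1, by rw [w2]; exact h0⟩

theorem good3_to (N : Matrix (Fin 3) (Fin 3) ℤ) (ε : ℤ) (h : good3 N ε) :
    (∀ σ, tZ N σ = 0 ∨ tZ N σ = ε) ∧ ∃ σ, tZ N σ = ε := by
  have w1 : tZ N 1 = N 0 0 * N 1 1 * N 2 2 := by
    rw [tZ, Fin.prod_univ_three]
    simp [mul_assoc]
  have w2 : tZ N (Equiv.swap 0 1) = -(N 1 0 * N 0 1 * N 2 2) := by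
    rw [tZ, Fin.prod_univ_three,
      show (Equiv.swap (0 : Fin 3) 1) 0 = 1 from by decide,
      show (Equiv.swap (0 : Fin 3) 1) 1 = 0 from by decide,
      show (Equiv.swap (0 : Fin 3) 1) 2 = 2 from by decide,
      show ((Equiv.Perm.sign (Equiv.swap (0 : Fin 3) 1) : ℤ)) = -1 from by decide]
    ring
  have w3 : tZ N (Equiv.swap 0 2) = -(N 2 0 * N 1 1 * N 0 2) := by
    rw [tZ, Fin.prod_univ_three,
      show (Equiv.swap (0 : Fin 3) 2) 0 = 2 from by decide,
      show (Equiv.swap (0 : Fin 3) 2) 1 = 1 from by decide,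
      show (Equiv.swap (0 : Fin 3) 2) 2 = 0 from by decide,
      show ((Equiv.Perm.sign (Equiv.swap (0 : Fin 3) 2) : ℤ)) = -1 from by decide]
    ring
  have w4 : tZ N (Equiv.swap 1 2) = -(N 0 0 * N 2 1 * N 1 2) := by
    rw [tZ, Fin.prod_univ_three,
      show (Equiv.swap (1 : Fin 3) 2) 0 = 0 from by decide,
      show (Equiv.swap (1 : Fin 3) 2) 1 = 2 from by decide,
      show (Equiv.swap (1 : Fin 3) 2) 2 = 1 from by decide,
      show ((Equiv.Perm.sign (Equiv.swap (1 : Fin 3) 2) : ℤ)) = -1 from by decide]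
    ring
  have w5 : tZ N (finRotate 3) = N 1 0 * N 2 1 * N 0 2 := by
    rw [tZ, Fin.prod_univ_three,
      show (finRotate 3) 0 = 1 from by decide,
      show (finRotate 3) 1 = 2 from by decide,
      show (finRotate 3) 2 = 0 from by decide,
      show ((Equiv.Perm.sign (finRotate 3) : ℤ)) = 1 from by decide]
    ring
  have w6 : tZ N (finRotate 3)⁻¹ = N 2 0 * N 0 1 * N 1 2 := by
    rw [tZ, Fin.prod_univ_three,
      show (finRotate 3)⁻¹ 0 = 2 from by decide,
      show (finRotate 3)⁻¹ 1 = 0 from by decide,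
      show (finRotate 3)⁻¹ 2 = 1 from by decide,
      show ((Equiv.Perm.sign (finRotate 3)⁻¹ : ℤ)) = 1 from by decide]
    ring
  obtain ⟨⟨h1, h2, h3, h4, h5, h6⟩, hx⟩ := h
  constructor
  · intro σ
    rcases perm3_enum σ with ⟨e0, e1, e2, hs⟩ | ⟨e0, e1, e2, hs⟩ | ⟨e0, e1, e2, hs⟩ |
        ⟨e0, e1, e2, hs⟩ | ⟨e0, e1, e2, hs⟩ | ⟨e0, e1, e2, hs⟩ <;>
      rw [tZ, Fin.prod_univ_three, e0, e1, e2, hs]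
    · rw [one_mul]; exact h1
    · rw [neg_one_mul]; exact h2
    · rw [neg_one_mul]; exact h3
    · rw [neg_one_mul]; exact h4
    · rw [one_mul]; exact h5
    · rw [one_mul]; exact h6
  · rcases hx with h0 | h0 | h0 | h0 | h0 | h0
    · exact ⟨1, by rw [w1]; exact h0⟩
    · exact ⟨Equiv.swap 0 1, by rw [w2]; exact h0⟩
    · exact ⟨Equiv.swap 0 2, by rw [w3]; exact h0⟩
    · exact ⟨Equiv.swap 1 2, by rw [w4]; exact h0⟩
    · exact ⟨finRotate 3, by rw [w5]; exact h0⟩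
    · exact ⟨(finRotate 3)⁻¹, by rw [w6]; exact h0⟩

/-! ### Decidable checks on `SZ` -/

set_option maxHeartbeats 1000000 in
theorem check1 : ∀ (ρ : Fin 1 → Fin 6) (c : Fin 1 → Fin 3),
    good1 (SZ.submatrix ρ c) 1 ∨ good1 (SZ.submatrix ρ c) (-1) ∨
      (SZ.submatrix ρ c) 0 0 = 0 := by
  decide +kernel

set_option maxHeartbeats 1000000 in
theorem check2 : ∀ (ρ : Fin 2 → Fin 6) (c : Fin 2 → Fin 3),
    good2 (SZ.submatrix ρ c) 1 ∨ good2 (SZ.submatrix ρ c) (-1) ∨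
      (SZ.submatrix ρ c) 0 0 * (SZ.submatrix ρ c) 1 1
        - (SZ.submatrix ρ c) 0 1 * (SZ.submatrix ρ c) 1 0 = 0 := by
  decide +kernel

set_option maxHeartbeats 1000000 in
theorem check3 : ∀ (ρ : Fin 3 → Fin 6) (c : Fin 3 → Fin 3),
    Function.Injective ρ → Function.Injective c →
    good3 (SZ.submatrix ρ c) 1 ∨ good3 (SZ.submatrix ρ c) (-1) ∨
    (SZ.submatrix ρ c) 0 0 * (SZ.submatrix ρ c) 1 1 * (SZ.submatrix ρ c) 2 2
      - (SZ.submatrix ρ c) 0 0 * (SZ.submatrix ρ c) 1 2 * (SZ.submatrix ρ c) 2 1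
      - (SZ.submatrix ρ c) 0 1 * (SZ.submatrix ρ c) 1 0 * (SZ.submatrix ρ c) 2 2
      + (SZ.submatrix ρ c) 0 1 * (SZ.submatrix ρ c) 1 2 * (SZ.submatrix ρ c) 2 0
      + (SZ.submatrix ρ c) 0 2 * (SZ.submatrix ρ c) 1 0 * (SZ.submatrix ρ c) 2 1
      - (SZ.submatrix ρ c) 0 2 * (SZ.submatrix ρ c) 1 1 * (SZ.submatrix ρ c) 2 0 = 0 := by
  decide +kernel

theorem Scounter_cast : ∀ (i : Fin 6) (j : Fin 3), Scounter i j = (SZ i j : ℝ) := by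
  intro i j
  fin_cases i <;> fin_cases j <;> norm_num [Scounter, SZ]

theorem SZ_abs : ∀ (i : Fin 6) (j : Fin 3), SZ i j = 0 ∨ SZ i j = 1 ∨ SZ i j = -1 := by
  intro i j; fin_cases i <;> fin_cases j <;> decide

theorem scounter_ssd : SSD Scounter := by
  intro k ρ c hρ hc
  have hk : k ≤ 3 := by
    have := Fintype.card_le_of_injective c hc
    simpa using this
  have hMN : ∀ i j, (Scounter.submatrix ρ c) i j = ((SZ.submatrix ρ c) i j : ℝ) :=
    fun i j => Scounter_cast (ρ i) (c j)
  have habs : ∀ i j, (SZ.submatrix ρ c) i j = 0 ∨ (SZ.submatrix ρ c) i j = 1 ∨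
      (SZ.submatrix ρ c) i j = -1 := fun i j => SZ_abs (ρ i) (c j)
  have hdet0 : (SZ.submatrix ρ c).det = 0 → (Scounter.submatrix ρ c).det = 0 := by
    intro hd
    have hmap : Scounter.submatrix ρ c = (Int.castRingHom ℝ).mapMatrix (SZ.submatrix ρ c) := by
      ext i j
      simpa using Scounter_cast (ρ i) (c j)
    rw [hmap, ← RingHom.map_det, hd]
    simp
  interval_cases k
  · left
    intro B hB
    rw [Matrix.det_fin_zero]
    exact one_ne_zero
  · rcases check1 ρ c with hg | hg | hd
    · exact Or.inl (transfer _ _ hMN habs 1 one_ne_zero (good1_to _ _ hg).1 (good1_to _ _ hg).2)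
    · exact Or.inl (transfer _ _ hMN habs (-1) (by norm_num)
        (good1_to _ _ hg).1 (good1_to _ _ hg).2)
    · right
      apply hdet0
      rw [Matrix.det_fin_one]
      exact hd
  · rcases check2 ρ c with hg | hg | hd
    · exact Or.inl (transfer _ _ hMN habs 1 one_ne_zero (good2_to _ _ hg).1 (good2_to _ _ hg).2)
    · exact Or.inl (transfer _ _ hMN habs (-1) (by norm_num)
        (good2_to _ _ hg).1 (good2_to _ _ hg).2)
    · right
      apply hdet0
      rw [Matrix.det_fin_two]
      exact hd
  · rcases check3 ρ c hρ hc with hg | hg | hd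
    · exact Or.inl (transfer _ _ hMN habs 1 one_ne_zero (good3_to _ _ hg).1 (good3_to _ _ hg).2)
    · exact Or.inl (transfer _ _ hMN habs (-1) (by norm_num)
        (good3_to _ _ hg).1 (good3_to _ _ hg).2)
    · right
      apply hdet0
      rw [Matrix.det_fin_three]
      exact hd

/-! ### The two e-cycles -/

theorem sign_Scounter : ∀ (i : Fin 6) (j : Fin 3),
    Real.sign (Scounter i j) = (SZ i j : ℝ) := by
  intro i j
  rcases SZ_abs i j with hv | hv | hv <;> rw [Scounter_cast i j, hv]
  · norm_num [Real.sign_zero]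
  · norm_num [Real.sign_one]
  · rw [show ((-1 : ℤ) : ℝ) = -1 by norm_num,
      Real.sign_of_neg (show (-1 : ℝ) < 0 by norm_num)]

theorem Scounter_ne_zero_of (i : Fin 6) (j : Fin 3) (h : SZ i j ≠ 0) : Scounter i j ≠ 0 := by
  rw [Scounter_cast i j]
  exact_mod_cast h

def a₁ : Fin 2 → Fin 6 := ![0, 1]
def b₁ : Fin 2 → Fin 3 := ![0, 2]
def a₂ : Fin 2 → Fin 6 := ![0, 2]
def b₂ : Fin 2 → Fin 3 := ![0, 1]

theorem cyc₁ : IsCyc Scounter a₁ b₁ := by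
  refine ⟨le_refl 2, by decide, by decide, ?_, ?_⟩ <;> intro j <;> fin_cases j <;>
    apply Scounter_ne_zero_of <;> decide

theorem cyc₂ : IsCyc Scounter a₂ b₂ := by
  refine ⟨le_refl 2, by decide, by decide, ?_, ?_⟩ <;> intro j <;> fin_cases j <;>
    apply Scounter_ne_zero_of <;> decide

theorem sign_one_of (i : Fin 6) (j : Fin 3) (h : SZ i j = 1) :
    Real.sign (Scounter i j) = 1 := by
  rw [sign_Scounter, h]; norm_num

theorem parity₁ : parity Scounter a₁ b₁ = 1 := by
  rw [parity, Fin.prod_univ_two,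
    show (finRotate 2) 0 = 1 from by decide, show (finRotate 2) 1 = 0 from by decide,
    show a₁ 0 = 0 from by decide, show a₁ 1 = 1 from by decide,
    show b₁ 0 = 0 from by decide, show b₁ 1 = 2 from by decide,
    sign_one_of 0 0 (by decide), sign_one_of 0 2 (by decide),
    sign_one_of 1 2 (by decide), sign_one_of 1 0 (by decide)]
  norm_num

theorem parity₂ : parity Scounter a₂ b₂ = 1 := by
  rw [parity, Fin.prod_univ_two,
    show (finRotate 2) 0 = 1 from by decide, show (finRotate 2) 1 = 0 from by decide,
    show a₂ 0 = 0 from by decide, show a₂ 1 = 2 from by decide,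
    show b₂ 0 = 0 from by decide, show b₂ 1 = 1 from by decide,
    sign_one_of 0 0 (by decide), sign_one_of 0 1 (by decide),
    sign_one_of 2 1 (by decide), sign_one_of 2 0 (by decide)]
  norm_num

/-! ### The intersection of the two cycles -/

def V₀ : Set (Fin 6 ⊕ Fin 3) := {Sum.inl 0, Sum.inr 0}

def E₀ : Set (Fin 6 × Fin 3) := {((0 : Fin 6), (0 : Fin 3))}

theorem hV : cycVerts a₁ b₁ ∩ cycVerts a₂ b₂ = V₀ := by
  have key : ∀ x : Fin 6 ⊕ Fin 3,
      (((∃ y, Sum.inl (a₁ y) = x) ∨ ∃ y, Sum.inr (b₁ y) = x) ∧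
       ((∃ y, Sum.inl (a₂ y) = x) ∨ ∃ y, Sum.inr (b₂ y) = x)) ↔
      (x = Sum.inl 0 ∨ x = Sum.inr 0) := by decide
  ext x
  simp only [cycVerts, V₀, Set.mem_inter_iff, Set.mem_union, Set.mem_range,
    Function.comp_apply, Set.mem_insert_iff, Set.mem_singleton_iff]
  exact key x

theorem hE : cycEdges a₁ b₁ ∩ cycEdges a₂ b₂ = E₀ := by
  have key : ∀ e : Fin 6 × Fin 3,
      ((∃ j : Fin 2, e = (a₁ j, b₁ j) ∨ e = (a₁ j, b₁ (finRotate 2 j))) ∧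
       (∃ j : Fin 2, e = (a₂ j, b₂ j) ∨ e = (a₂ j, b₂ (finRotate 2 j)))) ↔
      e = ((0 : Fin 6), (0 : Fin 3)) := by decide
  ext e
  simp only [cycEdges, E₀, Set.mem_inter_iff, Set.mem_setOf_eq, Set.mem_singleton_iff]
  exact key e

theorem hne : cycEdges a₁ b₁ ≠ cycEdges a₂ b₂ := by
  intro h
  have h1 : ((0 : Fin 6), (2 : Fin 3)) ∈ cycEdges a₁ b₁ := by
    simp only [cycEdges, Set.mem_setOf_eq]
    decide
  have h2 : ((0 : Fin 6), (2 : Fin 3)) ∉ cycEdges a₂ b₂ := by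
    simp only [cycEdges, Set.mem_setOf_eq]
    decide
  exact h2 (h ▸ h1)

theorem mem_E₀ : ((0 : Fin 6), (0 : Fin 3)) ∈ cycEdges a₁ b₁ ∩ cycEdges a₂ b₂ := by
  rw [hE]; rfl

theorem hadj : adjOf (cycEdges a₁ b₁ ∩ cycEdges a₂ b₂) (Sum.inl (0 : Fin 6)) (Sum.inr (0 : Fin 3)) :=
  mem_E₀

theorem hadj' : adjOf (cycEdges a₁ b₁ ∩ cycEdges a₂ b₂) (Sum.inr (0 : Fin 3)) (Sum.inl (0 : Fin 6)) :=
  mem_E₀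

theorem hcomp : ∀ v ∈ V₀,
    componentOf (cycEdges a₁ b₁ ∩ cycEdges a₂ b₂) (cycVerts a₁ b₁ ∩ cycVerts a₂ b₂) v = V₀ := by
  intro v hv
  apply Set.Subset.antisymm
  · intro x hx
    rw [← hV]
    exact hx.1
  · intro x hx
    refine ⟨by rw [hV]; exact hx, ?_⟩
    rcases hv with rfl | hv
    · rcases hx with rfl | hx
      · exact Relation.ReflTransGen.refl
      · rw [Set.mem_singleton_iff] at hx
        subst hx
        exact Relation.ReflTransGen.single hadj
    · rw [Set.mem_singleton_iff] at hv
      subst hv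
      rcases hx with rfl | hx
      · exact Relation.ReflTransGen.single hadj'
      · rw [Set.mem_singleton_iff] at hx
        subst hx
        exact Relation.ReflTransGen.refl

theorem hpathVerts : pathVerts (![0] : Fin 1 → Fin 6) (![0] : Fin 1 → Fin 3) = V₀ := by
  have key : ∀ x : Fin 6 ⊕ Fin 3,
      ((∃ y : Fin 1, Sum.inl ((![0] : Fin 1 → Fin 6) y) = x) ∨
       (∃ y : Fin 1, Sum.inr ((![0] : Fin 1 → Fin 3) y) = x)) ↔
      (x = Sum.inl 0 ∨ x = Sum.inr 0) := by decide
  ext x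
  simp only [pathVerts, V₀, Set.mem_union, Set.mem_range, Function.comp_apply,
    Set.mem_insert_iff, Set.mem_singleton_iff]
  exact key x

theorem hpathEdges : pathEdges (![0] : Fin 1 → Fin 6) (![0] : Fin 1 → Fin 3) = E₀ := by
  have key : ∀ e : Fin 6 × Fin 3,
      ((∃ i : Fin 1, e = ((![0] : Fin 1 → Fin 6) i, (![0] : Fin 1 → Fin 3) i)) ∨
       (∃ i : Fin 0, e = ((![0] : Fin 1 → Fin 6) i.succ, (![0] : Fin 1 → Fin 3) i.castSucc))) ↔
      e = ((0 : Fin 6), (0 : Fin 3)) := by decide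
  ext e
  simp only [pathEdges, E₀, Set.mem_union, Set.mem_setOf_eq, Set.mem_singleton_iff]
  exact key e

theorem hSR : SRIntersection (cycVerts a₁ b₁ ∩ cycVerts a₂ b₂)
    (cycEdges a₁ b₁ ∩ cycEdges a₂ b₂) := by
  constructor
  · rw [hV]
    exact ⟨Sum.inl 0, Set.mem_insert _ _⟩
  · intro v hv
    have hv₀ : v ∈ V₀ := by rw [← hV]; exact hv
    refine ⟨0, ![0], ![0], by intro x y h; fin_cases x <;> fin_cases y <;> rfl,
      by intro x y h; fin_cases x <;> fin_cases y <;> rfl, ?_, ?_⟩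
    · rw [hpathVerts, hcomp v hv₀]
    · rw [hpathEdges, hcomp v hv₀, hE]
      ext e
      simp only [Set.mem_sep_iff, Set.mem_singleton_iff, Set.mem_insert_iff, E₀, V₀]
      constructor
      · rintro rfl
        exact ⟨rfl, Or.inl rfl⟩
      · rintro ⟨h1, -⟩
        exact h1

theorem two_ecycles : TwoECyclesWithSRIntersection Scounter :=
  ⟨2, a₁, b₁, 2, a₂, b₂, cyc₁, parity₁, cyc₂, parity₂, hne, hSR⟩

end SSDAux

/-- The matrix `Scounter` is SSD — every square submatrix is sign nonsingular or has
determinant zero — yet its SR graph contains two e-cycles with distinct edge sets having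
S-to-R intersection; hence Condition (*) is not necessary for a matrix to be SSD. -/
theorem SSD_but_not_conditionStar :
    SSD Scounter ∧ TwoECyclesWithSRIntersection Scounter ∧ ¬ ConditionStar Scounter :=
  ⟨SSDAux.scounter_ssd, SSDAux.two_ecycles, fun h => h.2 SSDAux.two_ecycles⟩
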